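/- Let M = (L, μ0, Σ, δ) be an MDP and α a strategy such that M with strategy α is strongly synchronizing. Then there exists a state ℓ ∈ L that is reached with probability 1 under α, i.e., the probability (under the measure induced by μ0, α and δ on infinite plays) of the set of plays that visit ℓ at some step equals 1. -/
import Mathlib


open Filter

namespace SyncMDP

/-- A history: an initial state followed by a list of (action, state) steps. -/
structure Hist (L A : Type) where
  start : L
  steps : List (A × L)
deriving DecidableEq

variable {L A : Type}

/-- The last state of a history. -/
def Hist.last (h : Hist L A) : L := h.steps.foldl (fun _ p => p.2) h.start

/-- The length of a history. -/
def Hist.len (h : Hist L A) : ℕ := h.steps.length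

/-- Extending a history by one action and one state. -/
def Hist.extend (h : Hist L A) (a : A) (l : L) : Hist L A := ⟨h.start, h.steps ++ [(a, l)]⟩

/-- A probability distribution on a finite type. -/
def IsDist {S : Type} [Fintype S] (d : S → ℝ) : Prop :=
  (∀ s, 0 ≤ d s) ∧ ∑ s, d s = 1

/-- A probabilistic transition function. -/
def IsTrans [Fintype L] (δ : L → A → L → ℝ) : Prop := ∀ l a, IsDist (δ l a)

/-- A (randomized) strategy assigns a distribution over actions to every history. -/
def IsStrategy [Fintype A] (α : Hist L A → A → ℝ) : Prop :=
  ∀ h : Hist L A, (∀ a, 0 ≤ α h a) ∧ ∑ a, α h a = 1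

/-- A pure strategy plays one action with probability one after every history. -/
def PureStrat (α : Hist L A → A → ℝ) : Prop := ∀ h, ∃ a, α h a = 1

/-- A blind strategy only depends on the length of the history. -/
def BlindStrat (α : Hist L A → A → ℝ) : Prop :=
  ∀ h₁ h₂ : Hist L A, h₁.len = h₂.len → α h₁ = α h₂

/-- A memoryless strategy only depends on the last state of the history. -/
def Memoryless (α : Hist L A → A → ℝ) : Prop :=
  ∀ h₁ h₂ : Hist L A, h₁.last = h₂.last → α h₁ = α h₂

/-- Auxiliary product for the probability of a history: the first argument is the current
state, the second the history (prefix) read so far, the third the remaining steps. -/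
def prAux (δ : L → A → L → ℝ) (α : Hist L A → A → ℝ) : L → Hist L A → List (A × L) → ℝ
  | _, _, [] => 1
  | cur, pre, (a, l) :: rest => α pre a * δ cur a l * prAux δ α l (pre.extend a l) rest

/-- The probability `Pr^α(h)` of a history `h`. -/
def pr (μ0 : L → ℝ) (δ : L → A → L → ℝ) (α : Hist L A → A → ℝ) (h : Hist L A) : ℝ :=
  μ0 h.start * prAux δ α h.start ⟨h.start, []⟩ h.steps

variable (L A) in
/-- The finite set of all histories of length `n`. -/
def hists [Fintype L] [DecidableEq L] [Fintype A] [DecidableEq A] : ℕ → Finset (Hist L A)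
  | 0 => Finset.univ.image fun l : L => ⟨l, []⟩
  | n + 1 => (hists n).biUnion fun h => Finset.univ.image fun p : A × L => h.extend p.1 p.2

variable [Fintype L] [DecidableEq L] [Fintype A] [DecidableEq A]

/-- The outcome `X_n^α` : the distribution over states at step `n` under strategy `α`. -/
noncomputable def outcome (μ0 : L → ℝ) (δ : L → A → L → ℝ) (α : Hist L A → A → ℝ)
    (n : ℕ) (l : L) : ℝ :=
  ∑ h ∈ (hists L A n).filter (fun h => h.last = l), pr μ0 δ α h

/-- The norm `‖X‖ = max_{ℓ ∈ L} X(ℓ)` of a distribution on a (nonempty) finite type. -/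
noncomputable def dnorm (X : L → ℝ) : ℝ := ⨆ l, X l

/-- Strongly synchronizing: `liminf_n ‖X_n^α‖ = 1`. -/
def StronglySync (μ0 : L → ℝ) (δ : L → A → L → ℝ) (α : Hist L A → A → ℝ) : Prop :=
  liminf (fun n => dnorm (outcome μ0 δ α n)) atTop = 1

/-- Weakly synchronizing: `limsup_n ‖X_n^α‖ = 1`. -/
def WeaklySync (μ0 : L → ℝ) (δ : L → A → L → ℝ) (α : Hist L A → A → ℝ) : Prop :=
  limsup (fun n => dnorm (outcome μ0 δ α n)) atTop = 1

open Classical in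
/-- `Post_σ(ℓ)`: the support of `δ(ℓ,σ)`. -/
noncomputable def post (δ : L → A → L → ℝ) (l : L) (a : A) : Finset L :=
  Finset.univ.filter fun l' => 0 < δ l a l'

/-- Transition function of the perfect-information subset construction. -/
noncomputable def deltaP (δ : L → A → L → ℝ) (s : Finset L) (f : L → A) : Finset L :=
  s.biUnion fun l => post δ l (f l)

/-- Transition function of the blind subset construction. -/
noncomputable def deltaB (δ : L → A → L → ℝ) (s : Finset L) (a : A) : Finset L :=
  s.biUnion fun l => post δ l a

open Classical in
/-- The initial cell: the support of `μ0`. -/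
noncomputable def initCell (μ0 : L → ℝ) : Finset L :=
  Finset.univ.filter fun l => 0 < μ0 l

/-- Reachability of a cell from the initial cell in the perfect-information
subset construction. -/
def ReachP (μ0 : L → ℝ) (δ : L → A → L → ℝ) (s : Finset L) : Prop :=
  Relation.ReflTransGen (fun t t' => ∃ f : L → A, deltaP δ t f = t') (initCell μ0) s

/-- Reachability of a cell from the initial cell in the blind subset construction. -/
def ReachB (μ0 : L → ℝ) (δ : L → A → L → ℝ) (s : Finset L) : Prop :=
  Relation.ReflTransGen (fun t t' => ∃ a : A, deltaB δ t a = t') (initCell μ0) s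

/-- Cyclic successor on `Fin d`. -/
def cyc {d : ℕ} (hd : 0 < d) (i : Fin d) : Fin d := ⟨((i : ℕ) + 1) % d, Nat.mod_lt _ hd⟩

/-- A recurrent cyclic set for the cycle `(s, act)` of length `d` of the
perfect-information subset construction. -/
def IsRCSP {d : ℕ} (hd : 0 < d) (δ : L → A → L → ℝ) (s : Fin d → Finset L)
    (act : Fin d → L → A) (g : Fin d → Finset L) : Prop :=
  ∀ i : Fin d, (g i).Nonempty ∧ g i ⊆ s i ∧
    (g i).biUnion (fun l => post δ l (act i l)) = g (cyc hd i)

/-- A minimal recurrent cyclic set (perfect-information). -/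
def IsMinRCSP {d : ℕ} (hd : 0 < d) (δ : L → A → L → ℝ) (s : Fin d → Finset L)
    (act : Fin d → L → A) (g : Fin d → Finset L) : Prop :=
  IsRCSP hd δ s act g ∧
    ∀ g' : Fin d → Finset L, IsRCSP hd δ s act g' → (∀ i, g' i ⊆ g i) → g' = g

/-- A recurrent cyclic set for the cycle `(s, act)` of length `d` of the blind
subset construction. -/
def IsRCSB {d : ℕ} (hd : 0 < d) (δ : L → A → L → ℝ) (s : Fin d → Finset L)
    (act : Fin d → A) (g : Fin d → Finset L) : Prop :=
  ∀ i : Fin d, (g i).Nonempty ∧ g i ⊆ s i ∧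
    (g i).biUnion (fun l => post δ l (act i)) = g (cyc hd i)

/-- A minimal recurrent cyclic set (blind). -/
def IsMinRCSB {d : ℕ} (hd : 0 < d) (δ : L → A → L → ℝ) (s : Fin d → Finset L)
    (act : Fin d → A) (g : Fin d → Finset L) : Prop :=
  IsRCSB hd δ s act g ∧
    ∀ g' : Fin d → Finset L, IsRCSB hd δ s act g' → (∀ i, g' i ⊆ g i) → g' = g


/-- The list of states visited by a history. -/
def Hist.states (h : Hist L A) : List L := h.start :: h.steps.map Prod.snd

section Aux
set_option linter.unusedSectionVars false

variable (μ0 : L → ℝ) (δ : L → A → L → ℝ) (α : Hist L A → A → ℝ)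

lemma prAux_nonneg (hδ : IsTrans δ) (hα : IsStrategy α) :
    ∀ (xs : List (A × L)) (cur : L) (pre : Hist L A), 0 ≤ prAux δ α cur pre xs := by
  intro xs
  induction xs with
  | nil => intro cur pre; simp [prAux]
  | cons p rest ih =>
    intro cur pre
    obtain ⟨a, l⟩ := p
    exact mul_nonneg (mul_nonneg ((hα pre).1 a) ((hδ cur a).1 l)) (ih _ _)

lemma pr_nonneg (hμ0 : IsDist μ0) (hδ : IsTrans δ) (hα : IsStrategy α) (h : Hist L A) :
    0 ≤ pr μ0 δ α h :=
  mul_nonneg (hμ0.1 _) (prAux_nonneg δ α hδ hα _ _ _)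

lemma prAux_snoc : ∀ (xs : List (A × L)) (cur st : L) (pre : List (A × L)) (a : A) (l : L),
    prAux δ α cur ⟨st, pre⟩ (xs ++ [(a, l)]) =
      prAux δ α cur ⟨st, pre⟩ xs * α ⟨st, pre ++ xs⟩ a *
        δ (xs.foldl (fun _ p => p.2) cur) a l := by
  intro xs
  induction xs with
  | nil => intro cur st pre a l; simp [prAux]
  | cons p rest ih =>
    intro cur st pre a l
    obtain ⟨b, m⟩ := p
    show prAux δ α cur ⟨st, pre⟩ ((b, m) :: (rest ++ [(a, l)])) = _
    rw [prAux]
    show α ⟨st, pre⟩ b * δ cur b m *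
        prAux δ α m ⟨st, pre ++ [(b, m)]⟩ (rest ++ [(a, l)]) = _
    rw [ih m st (pre ++ [(b, m)]) a l]
    rw [prAux]
    show _ = α ⟨st, pre⟩ b * δ cur b m * prAux δ α m ⟨st, pre ++ [(b, m)]⟩ rest *
        α ⟨st, pre ++ (b, m) :: rest⟩ a * δ ((rest).foldl (fun _ p => p.2) m) a l
    rw [show pre ++ (b, m) :: rest = (pre ++ [(b, m)]) ++ rest by simp]
    ring

lemma pr_extend (h : Hist L A) (a : A) (l : L) :
    pr μ0 δ α (h.extend a l) = pr μ0 δ α h * (α h a * δ h.last a l) := by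
  obtain ⟨st, steps⟩ := h
  show μ0 st * prAux δ α st ⟨st, []⟩ (steps ++ [(a, l)]) = _
  rw [prAux_snoc]
  simp only [List.nil_append]
  show μ0 st * (prAux δ α st ⟨st, []⟩ steps * α ⟨st, steps⟩ a *
      δ (steps.foldl (fun _ p => p.2) st) a l) = _
  rw [pr, Hist.last]
  ring

lemma sum_extend (hδ : IsTrans δ) (hα : IsStrategy α) (h : Hist L A) :
    ∑ p : A × L, pr μ0 δ α (h.extend p.1 p.2) = pr μ0 δ α h := by
  rw [Fintype.sum_prod_type]
  have : ∀ a : A, ∑ l : L, pr μ0 δ α (h.extend a l) = pr μ0 δ α h * α h a := by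
    intro a
    simp only [pr_extend μ0 δ α h a]
    rw [← Finset.mul_sum, ← Finset.mul_sum, (hδ h.last a).2]
    ring
  simp only [this]
  rw [← Finset.mul_sum, (hα h).2, mul_one]

lemma len_mem_hists {n : ℕ} {h : Hist L A} (hh : h ∈ hists L A n) : h.len = n := by
  induction n generalizing h with
  | zero =>
    simp only [hists, Finset.mem_image] at hh
    obtain ⟨l, _, rfl⟩ := hh
    rfl
  | succ n ih =>
    simp only [hists, Finset.mem_biUnion, Finset.mem_image] at hh
    obtain ⟨h', hh', p, _, rfl⟩ := hh
    simp [Hist.extend, Hist.len] at ih ⊢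
    rw [ih hh']

lemma extend_inj {n : ℕ} {h h' : Hist L A} (hh : h ∈ hists L A n) (hh' : h' ∈ hists L A n)
    {a a' : A} {l l' : L} (he : h.extend a l = h'.extend a' l') :
    h = h' ∧ a = a' ∧ l = l' := by
  simp only [Hist.extend, Hist.mk.injEq] at he
  obtain ⟨h1, h2⟩ := he
  have hlen : h.steps.length = h'.steps.length := by
    have := len_mem_hists hh; have := len_mem_hists hh'
    simp [Hist.len] at *; omega
  obtain ⟨h3, h4⟩ := List.append_inj h2 hlen
  simp at h4
  obtain ⟨h5, h6⟩ := h4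
  refine ⟨?_, h5, h6⟩
  cases h; cases h'; simp_all

lemma sum_hists_succ (n : ℕ) (g : Hist L A → ℝ) :
    ∑ h ∈ hists L A (n + 1), g h =
      ∑ h ∈ hists L A n, ∑ p : A × L, g (h.extend p.1 p.2) := by
  rw [show hists L A (n + 1) =
      (hists L A n).biUnion (fun h => Finset.univ.image fun p : A × L => h.extend p.1 p.2)
      from rfl]
  rw [Finset.sum_biUnion]
  · refine Finset.sum_congr rfl fun h hh => ?_
    rw [Finset.sum_image]
    intro p _ q _ hpq
    have := extend_inj hh hh hpq
    exact Prod.ext this.2.1 this.2.2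
  · intro h hh h' hh' hne
    simp only [Finset.mem_coe] at hh hh'
    intro s hs hs' x hx
    have h1 := hs hx
    have h2 := hs' hx
    simp only [Finset.mem_image, Finset.mem_univ, true_and] at h1 h2
    obtain ⟨p, rfl⟩ := h1
    obtain ⟨q, hq⟩ := h2
    exact absurd (extend_inj hh hh' hq.symm).1 hne

lemma total (hμ0 : IsDist μ0) (hδ : IsTrans δ) (hα : IsStrategy α) (n : ℕ) :
    ∑ h ∈ hists L A n, pr μ0 δ α h = 1 := by
  induction n with
  | zero =>
    rw [show hists L A 0 = Finset.univ.image fun l : L => (⟨l, []⟩ : Hist L A) from rfl]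
    rw [Finset.sum_image (by intro a _ b _ he; simpa using he)]
    simp only [pr, prAux, mul_one]
    exact hμ0.2
  | succ n ih =>
    rw [sum_hists_succ]
    rw [← ih]
    exact Finset.sum_congr rfl fun h _ => sum_extend μ0 δ α hδ hα h

lemma last_mem_states (h : Hist L A) : h.last ∈ h.states := by
  obtain ⟨st, steps⟩ := h
  show steps.foldl (fun _ p => p.2) st ∈ st :: steps.map Prod.snd
  induction steps generalizing st with
  | nil => simp
  | cons p rest ih =>
    simp only [List.foldl_cons, List.map_cons]
    have := ih p.2
    simp at this ⊢
    tauto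

lemma states_extend (h : Hist L A) (a : A) (l : L) :
    (h.extend a l).states = h.states ++ [l] := by
  simp [Hist.extend, Hist.states]

end Aux

/-- If `M` with strategy `α` is strongly synchronizing, then some state
`ℓ` is reached with probability 1 under `α`: the probability (in the measure induced on
infinite plays, obtained as the limit of the probabilities of the sets of histories of
length `n` that visit `ℓ`) of the set of plays visiting `ℓ` at some step equals `1`. -/
theorem strongly_sync_reach_prob_one
    (μ0 : L → ℝ) (δ : L → A → L → ℝ)
    (hμ0 : IsDist μ0) (hδ : IsTrans δ)
    (α : Hist L A → A → ℝ) (hα : IsStrategy α)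
    (hsync : StronglySync μ0 δ α) :
    ∃ ℓ : L, Filter.Tendsto
      (fun n => ∑ h ∈ (hists L A n).filter (fun h => ℓ ∈ h.states), pr μ0 δ α h)
      atTop (nhds 1) := by
  classical
  have hLne : Nonempty L := by
    by_contra hc
    rw [not_nonempty_iff] at hc
    have := hμ0.2
    simp [Finset.univ_eq_empty] at this
  set F : L → ℕ → ℝ :=
    fun ℓ n => ∑ h ∈ (hists L A n).filter (fun h => ℓ ∈ h.states), pr μ0 δ α h with hF
  have hprnn := pr_nonneg μ0 δ α hμ0 hδ hα
  have hFnonneg : ∀ ℓ n, 0 ≤ F ℓ n := fun ℓ n => Finset.sum_nonneg fun h _ => hprnn h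
  have hFle1 : ∀ ℓ n, F ℓ n ≤ 1 := by
    intro ℓ n
    rw [← total μ0 δ α hμ0 hδ hα n]
    exact Finset.sum_le_sum_of_subset_of_nonneg (Finset.filter_subset _ _)
      (fun h _ _ => hprnn h)
  have hFmono : ∀ ℓ, Monotone (F ℓ) := by
    intro ℓ
    apply monotone_nat_of_le_succ
    intro n
    have h1 : F ℓ (n + 1) = ∑ h ∈ hists L A n, ∑ p : A × L,
        (if ℓ ∈ (h.extend p.1 p.2).states then pr μ0 δ α (h.extend p.1 p.2) else 0) := by
      rw [hF]
      simp only
      rw [Finset.sum_filter, sum_hists_succ]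
    rw [h1, hF]
    simp only [Finset.sum_filter]
    apply Finset.sum_le_sum
    intro h _
    by_cases hc : ℓ ∈ h.states
    · rw [if_pos hc]
      have heq : ∀ p : A × L,
          (if ℓ ∈ (h.extend p.1 p.2).states then pr μ0 δ α (h.extend p.1 p.2) else 0)
            = pr μ0 δ α (h.extend p.1 p.2) := by
        intro p
        rw [if_pos]
        rw [states_extend]
        exact List.mem_append_left _ hc
      rw [Finset.sum_congr rfl fun p _ => heq p, sum_extend μ0 δ α hδ hα h]
    · rw [if_neg hc]
      apply Finset.sum_nonneg
      intro p _
      split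
      · exact hprnn _
      · exact le_refl 0
  have hbdd : ∀ ℓ, BddAbove (Set.range (F ℓ)) := fun ℓ =>
    ⟨1, by rintro x ⟨n, rfl⟩; exact hFle1 ℓ n⟩
  set f : L → ℝ := fun ℓ => ⨆ n, F ℓ n with hf
  obtain ⟨l0, hmax⟩ := Finite.exists_max f
  have houtF : ∀ n (ℓ : L), outcome μ0 δ α n ℓ ≤ F ℓ n := by
    intro n ℓ
    apply Finset.sum_le_sum_of_subset_of_nonneg
    · intro h hh
      simp only [Finset.mem_filter] at hh ⊢
      exact ⟨hh.1, hh.2 ▸ last_mem_states h⟩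
    · intro h _ _
      exact hprnn h
  have hdn : ∀ n, dnorm (outcome μ0 δ α n) ≤ f l0 := by
    intro n
    apply ciSup_le
    intro ℓ
    calc outcome μ0 δ α n ℓ ≤ F ℓ n := houtF n ℓ
      _ ≤ f ℓ := le_ciSup (hbdd ℓ) n
      _ ≤ f l0 := hmax ℓ
  have hdnn : ∀ n, (0:ℝ) ≤ dnorm (outcome μ0 δ α n) := by
    intro n
    obtain ⟨ℓ⟩ := hLne
    calc (0:ℝ) ≤ outcome μ0 δ α n ℓ := Finset.sum_nonneg fun h _ => hprnn h
      _ ≤ dnorm (outcome μ0 δ α n) := le_ciSup (Finite.bddAbove_range _) ℓ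
  have h1le : (1 : ℝ) ≤ f l0 := by
    rw [← hsync]
    exact liminf_le_of_frequently_le (Frequently.of_forall fun n => hdn n)
      (isBoundedUnder_of ⟨0, fun n => hdnn n⟩)
  have hle1 : f l0 ≤ 1 := ciSup_le fun n => hFle1 l0 n
  have hfeq : f l0 = 1 := le_antisymm hle1 h1le
  refine ⟨l0, ?_⟩
  have := tendsto_atTop_ciSup (hFmono l0) (hbdd l0)
  rw [show (⨆ n, F l0 n) = 1 from hfeq] at this
  exact this

end SyncMDP
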